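/- Let Γ be a divisible ordered abelian group and P ∈ S_max^∨[Y] of degree n with the formal polynomial |P| factored (i.e., its coefficient map is concave with full support between lower degree m and degree n). Then P̂ factors as P̂(y) = P_n ⊙ (y ⊖ r_1) ⊙ ... ⊙ (y ⊖ r_n), where r_i ∈ S_max^∨ is the unique signed element with r_i ⊙ P_{n-i+1} = ⊖ P_{n-i} for i ≤ n−m, and r_i = 0 for i > n−m; moreover |r_1| ≥ ... ≥ |r_n| are the corners of |P| counted with multiplicities. -/

import Mathlib

set_option linter.unusedVariables false

/-- The symmetrized tropical semiring `S_max(Γ)` over an ordered abelian group `Γ`: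
its elements are the zero, the positive elements, the negative elements and the
(nonzero) balanced elements, each carrying a modulus in `Γ`. -/
inductive SMax (Γ : Type) : Type
  | zero : SMax Γ
  | pos : Γ → SMax Γ
  | neg : Γ → SMax Γ
  | bal : Γ → SMax Γ
  deriving DecidableEq

namespace SMax

variable {Γ : Type} [AddCommGroup Γ] [LinearOrder Γ] [IsOrderedAddMonoid Γ]

/-- The modulus (absolute value) map, with values in the tropical semifield `T_max = Γ ∪ {⊥}`. -/
def mod : SMax Γ → WithBot Γ
  | .zero => ⊥
  | .pos a => (a : WithBot Γ)
  | .neg a => (a : WithBot Γ)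
  | .bal a => (a : WithBot Γ)

/-- The negation map `⊖`. -/
def sneg : SMax Γ → SMax Γ
  | .zero => .zero
  | .pos a => .neg a
  | .neg a => .pos a
  | .bal a => .bal a

/-- Addition `⊕` of `S_max`. -/
def add : SMax Γ → SMax Γ → SMax Γ
  | .zero, y => y
  | x, .zero => x
  | .pos a, .pos b => .pos (max a b)
  | .neg a, .neg b => .neg (max a b)
  | .pos a, .neg b => if b < a then .pos a else if a < b then .neg b else .bal a
  | .neg a, .pos b => if b < a then .neg a else if a < b then .pos b else .bal a
  | .bal a, .pos b => if a < b then .pos b else .bal a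
  | .bal a, .neg b => if a < b then .neg b else .bal a
  | .pos a, .bal b => if b < a then .pos a else .bal b
  | .neg a, .bal b => if b < a then .neg a else .bal b
  | .bal a, .bal b => .bal (max a b)

/-- Multiplication `⊙` of `S_max`. -/
def mul : SMax Γ → SMax Γ → SMax Γ
  | .zero, _ => .zero
  | _, .zero => .zero
  | .pos a, .pos b => .pos (a + b)
  | .pos a, .neg b => .neg (a + b)
  | .pos a, .bal b => .bal (a + b)
  | .neg a, .pos b => .neg (a + b)
  | .neg a, .neg b => .pos (a + b)
  | .neg a, .bal b => .bal (a + b)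
  | .bal a, .pos b => .bal (a + b)
  | .bal a, .neg b => .bal (a + b)
  | .bal a, .bal b => .bal (a + b)

/-- The multiplicative unit `𝟙 = (0, ⊥)`. -/
def one : SMax Γ := .pos 0

/-- Signed elements (`S_max^∨`): positive, negative, or zero. -/
def isSigned : SMax Γ → Prop
  | .bal _ => False
  | _ => True

/-- Balanced elements (`S_max^∘`), including zero. -/
def isBalanced : SMax Γ → Prop
  | .zero => True
  | .bal _ => True
  | _ => False

/-- The balance relation `x ∇ y`, i.e. `x ⊖ y` is balanced. -/
def nabla (x y : SMax Γ) : Prop := isBalanced (add x (sneg y))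

/-- Powers in `S_max`. -/
def spow (x : SMax Γ) : ℕ → SMax Γ
  | 0 => one
  | k + 1 => mul x (spow x k)

/-- Sum of a list of elements of `S_max`. -/
def lsum : List (SMax Γ) → SMax Γ := List.foldr add .zero

/-- The polynomial function `P̂(y) = ⊕_{k ≤ n} P_k ⊙ y^{⊙ k}` of a formal
polynomial of degree at most `n`. -/
def phat (P : ℕ → SMax Γ) (n : ℕ) (y : SMax Γ) : SMax Γ :=
  lsum ((List.range (n + 1)).map fun k => mul (P k) (spow y k))

/-- The product `(y ⊖ r₁) ⊙ ⋯ ⊙ (y ⊖ r_n)` over a list of roots. -/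
def evalFactors (y : SMax Γ) : List (SMax Γ) → SMax Γ
  | [] => one
  | r :: rs => mul (add y (sneg r)) (evalFactors y rs)

/-- The formal linear polynomial `Y ⊖ r`. -/
def linFactor (r : SMax Γ) : ℕ → SMax Γ :=
  fun k => if k = 0 then sneg r else if k = 1 then one else .zero

/-- Constant formal polynomial. -/
def constPoly (c : SMax Γ) : ℕ → SMax Γ := fun k => if k = 0 then c else .zero

/-- Cauchy product of formal polynomials over `S_max`. -/
def polyMul (P Q : ℕ → SMax Γ) : ℕ → SMax Γ :=
  fun k => lsum ((List.range (k + 1)).map fun i => mul (P i) (Q (k - i)))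

/-- The formal polynomial `c ⊙ (Y ⊖ r₁) ⋯ (Y ⊖ r_n)`. -/
def prodLin (c : SMax Γ) : List (SMax Γ) → ℕ → SMax Γ
  | [] => constPoly c
  | r :: rs => polyMul (linFactor r) (prodLin c rs)

/-- Polynomial function of a tropical polynomial over `T_max = WithBot Γ`. -/
def tphat (Q : ℕ → WithBot Γ) (n : ℕ) (x : WithBot Γ) : WithBot Γ :=
  (Finset.range (n + 1)).sup fun k => Q k + k • x

/-- `a` is a root of the (finitely supported) formal polynomial `P`, i.e. `P̂(a) ∇ 0`. -/
def IsRoot (P : ℕ → SMax Γ) (a : SMax Γ) : Prop :=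
  ∃ N, (∀ k, N < k → P k = .zero) ∧ nabla (phat P N a) .zero

/-- The coefficientwise balance relation `λ P ∇ (Y ⊖ a) Q`. -/
def balFactor (a lam : SMax Γ) (P Q : ℕ → SMax Γ) : Prop :=
  (∀ k, 1 ≤ k → nabla (mul lam (P k)) (add (Q (k - 1)) (mul (sneg a) (Q k)))) ∧
  nabla (mul lam (P 0)) (mul (sneg a) (Q 0))

/-- The Baker–Lorscheid multiplicity of `a` as a root of `P` is at least `m`:
there is a chain of length `m` of divisions by `(Y ⊖ a)` up to balance, with
tangible multipliers and signed quotients. -/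
def MultGe (a : SMax Γ) : ℕ → (ℕ → SMax Γ) → Prop
  | 0, _ => True
  | m + 1, P => IsRoot P a ∧ ∃ (lam : SMax Γ) (Q : ℕ → SMax Γ),
      isSigned lam ∧ lam ≠ .zero ∧ (∀ k, isSigned (Q k)) ∧
      (∃ N, ∀ k, N < k → Q k = .zero) ∧ balFactor a lam P Q ∧ MultGe a m Q

/-- The Baker–Lorscheid multiplicity of `a` as a root of `P` equals `m`. -/
def MultEq (a : SMax Γ) (P : ℕ → SMax Γ) (m : ℕ) : Prop :=
  MultGe a m P ∧ ¬ MultGe a (m + 1) P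

/-- The number of sign changes in the (nonzero) coefficients of a formal polynomial. -/
noncomputable def signChanges (Q : ℕ → SMax Γ) : ℕ :=
  Set.ncard {i : ℕ | ∃ k, 1 ≤ k ∧ Q i ≠ .zero ∧ Q i = sneg (Q (i + k)) ∧
    ∀ j, i < j → j < i + k → Q j = .zero}

end SMax

set_option maxHeartbeats 1600000

namespace SMax

variable {Γ : Type} [AddCommGroup Γ] [LinearOrder Γ] [IsOrderedAddMonoid Γ]

set_option linter.unusedSectionVars false

/-- Sign (discriminator) of an element. -/
def sgn : SMax Γ → SMax Γ
  | .zero => .zero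
  | .pos _ => .pos 0
  | .neg _ => .neg 0
  | .bal _ => .bal 0

lemma add_zero' (x : SMax Γ) : add x .zero = x := by cases x <;> rfl
lemma zero_add' (x : SMax Γ) : add .zero x = x := by cases x <;> rfl
lemma mul_zero' (x : SMax Γ) : mul x .zero = .zero := by cases x <;> rfl
lemma zero_mul' (x : SMax Γ) : mul .zero x = .zero := by cases x <;> rfl
lemma mul_one' (x : SMax Γ) : mul x one = x := by cases x <;> simp [mul, one]
lemma one_mul' (x : SMax Γ) : mul one x = x := by cases x <;> simp [mul, one]
lemma mul_comm' (x y : SMax Γ) : mul x y = mul y x := by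
  cases x <;> cases y <;> simp [mul, add_comm]
lemma mul_assoc' (x y z : SMax Γ) : mul (mul x y) z = mul x (mul y z) := by
  cases x <;> cases y <;> cases z <;> simp [mul, add_assoc]
lemma sneg_sneg' (x : SMax Γ) : sneg (sneg x) = x := by cases x <;> rfl
lemma mul_sneg (x y : SMax Γ) : mul x (sneg y) = sneg (mul x y) := by
  cases x <;> cases y <;> simp [mul, sneg]
lemma sneg_eq_zero {x : SMax Γ} : sneg x = zero ↔ x = zero := by cases x <;> simp [sneg]
lemma mod_sneg (x : SMax Γ) : mod (sneg x) = mod x := by cases x <;> rfl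
lemma mod_eq_bot {x : SMax Γ} : mod x = ⊥ ↔ x = zero := by cases x <;> simp [mod]
lemma mod_mul (x y : SMax Γ) : mod (mul x y) = mod x + mod y := by
  cases x <;> cases y <;> simp [mul, mod]
lemma add_comm' (x y : SMax Γ) : add x y = add y x := by
  cases x <;> cases y <;> simp [add, max_comm] <;> split_ifs <;>
    first
    | rfl
    | (exact absurd (lt_trans ‹_› ‹_›) (lt_irrefl _))
    | (congr 1; exact le_antisymm (not_lt.1 ‹_›) (not_lt.1 ‹_›))
lemma mod_add (x y : SMax Γ) : mod (add x y) = max (mod x) (mod y) := by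
  cases x <;> cases y <;> simp [add, mod] <;> split_ifs <;>
    simp_all [mod, max_def, le_of_lt, le_of_not_gt] <;>
    first
    | rfl
    | (exact absurd (lt_of_le_of_lt ‹_› ‹_›) (lt_irrefl _))
    | (exact le_antisymm ‹_› ‹_›)
    | (exact absurd ‹_› (not_lt.2 ‹_›))
lemma add_assoc' (x y z : SMax Γ) : add (add x y) z = add x (add y z) := by
  rcases x with _|a|a|a <;> rcases y with _|b|b|b <;> rcases z with _|c|c|c <;>
    (try simp only [zero_add', add_zero']) <;> (try rfl)
  all_goals (
    rcases lt_trichotomy a b with hab|hab|hab <;>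
    rcases lt_trichotomy b c with hbc|hbc|hbc <;>
    rcases lt_trichotomy a c with hac|hac|hac <;>
    first
    | exact absurd (lt_trans hab hbc) (lt_asymm hac)
    | exact absurd (lt_trans hbc hab) (lt_asymm hac)
    | (simp [add, max_def, lt_irrefl, le_refl, hab, hbc, hac, lt_asymm hab, lt_asymm hbc, lt_asymm hac, le_of_lt hab, le_of_lt hbc, le_of_lt hac, not_le.mpr hab, not_le.mpr hbc, not_le.mpr hac]; done)
    | (simp [add, max_def, lt_irrefl, le_refl, hab, hbc, hac, lt_asymm hab, lt_asymm hbc, le_of_lt hab, le_of_lt hbc, not_le.mpr hab, not_le.mpr hbc]; done)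
    | (simp [add, max_def, lt_irrefl, le_refl, hab, hbc, hac, lt_asymm hab, lt_asymm hac, le_of_lt hab, le_of_lt hac, not_le.mpr hab, not_le.mpr hac]; done)
    | (simp [add, max_def, lt_irrefl, le_refl, hab, hbc, hac, lt_asymm hbc, lt_asymm hac, le_of_lt hbc, le_of_lt hac, not_le.mpr hbc, not_le.mpr hac]; done)
    | (simp [add, max_def, lt_irrefl, le_refl, hab, hbc, hac, lt_asymm hab, le_of_lt hab, not_le.mpr hab]; done)
    | (simp [add, max_def, lt_irrefl, le_refl, hab, hbc, hac, lt_asymm hbc, le_of_lt hbc, not_le.mpr hbc]; done)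
    | (simp [add, max_def, lt_irrefl, le_refl, hab, hbc, hac, lt_asymm hac, le_of_lt hac, not_le.mpr hac]; done)
    | (simp [add, max_def, lt_irrefl, le_refl, hab, hbc, hac]; done))

lemma add_mul' (x y c : SMax Γ) : mul (add x y) c = add (mul x c) (mul y c) := by
  rcases x with _|a|a|a <;> rcases y with _|b|b|b <;> rcases c with _|c|c|c <;>
    (try simp only [zero_add', add_zero', mul_zero', zero_mul']) <;> (try rfl)
  all_goals (
    rcases lt_trichotomy a b with hab|hab|hab <;>
    first
    | (simp [mul, add, max_def, add_lt_add_iff_right, add_le_add_iff_right, lt_irrefl,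
        le_refl, hab, lt_asymm hab, le_of_lt hab, not_le.mpr hab]; done)
    | (simp [mul, add, max_def, add_lt_add_iff_right, add_le_add_iff_right, lt_irrefl,
        le_refl, hab]; done))

lemma mul_add' (c x y : SMax Γ) : mul c (add x y) = add (mul c x) (mul c y) := by
  rw [mul_comm' c (add x y), add_mul', mul_comm' x c, mul_comm' y c]

/-- absorption: strictly smaller modulus is absorbed. -/
lemma add_eq_left {x z : SMax Γ} (h : mod z < mod x) : add x z = x := by
  cases x <;> cases z <;>
    simp only [mod, not_lt_bot, WithBot.bot_lt_coe, WithBot.coe_lt_coe] at h <;>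
    first
    | exact add_zero' _
    | (simp [add, max_def, lt_asymm h, not_le.mpr h, le_of_lt h, h])

lemma add_eq_right {x z : SMax Γ} (h : mod z < mod x) : add z x = x := by
  rw [add_comm']; exact add_eq_left h

lemma add_sgn {x z : SMax Γ} (hm : mod z = mod x) (hs : sgn z = sgn x) : add x z = x := by
  cases x <;> cases z <;> simp_all [mod, sgn, add]

lemma add_mixed {x z : SMax Γ} (hm : mod z = mod x) (hx : x ≠ zero) (hs : sgn z ≠ sgn x) :
    add x z = mul (bal 0) x := by
  cases x <;> cases z <;> simp_all [mod, sgn, add, mul]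

lemma add_bal_right {x : SMax Γ} {a : Γ} (h : mod x ≤ (a : WithBot Γ)) : add x (bal a) = bal a := by
  cases x with
  | zero => rfl
  | pos b => simp only [mod, WithBot.coe_le_coe] at h; simp [add, not_lt.mpr h]
  | neg b => simp only [mod, WithBot.coe_le_coe] at h; simp [add, not_lt.mpr h]
  | bal b => simp only [mod, WithBot.coe_le_coe] at h; simp [add, max_eq_right h]

lemma add_bal_left {z : SMax Γ} {a : Γ} (h : mod z ≤ (a : WithBot Γ)) : add (bal a) z = bal a := by
  rw [add_comm']; exact add_bal_right h

lemma bal_mul {w : SMax Γ} {u : Γ} (a : Γ) (h : mod w = (u : WithBot Γ)) :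
    mul (bal a) w = bal (a + u) := by
  cases w <;> simp_all [mod, mul]

lemma mod_coe_of_ne {x : SMax Γ} (hx : x ≠ zero) : ∃ u : Γ, mod x = (u : WithBot Γ) := by
  cases x with
  | zero => exact absurd rfl hx
  | pos a => exact ⟨a, rfl⟩
  | neg a => exact ⟨a, rfl⟩
  | bal a => exact ⟨a, rfl⟩

lemma lsum_cons (z : SMax Γ) (L : List (SMax Γ)) : lsum (z :: L) = add z (lsum L) := rfl

lemma mod_lsum (L : List (SMax Γ)) : mod (lsum L) = (L.map mod).foldr max ⊥ := by
  induction L with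
  | nil => rfl
  | cons z L ih => rw [List.map_cons, List.foldr_cons, lsum_cons, mod_add, ih]

lemma lsum_eq_zero {L : List (SMax Γ)} (h : ∀ z ∈ L, z = zero) : lsum L = zero := by
  induction L with
  | nil => rfl
  | cons z L ih =>
    rw [lsum_cons, h z (by simp), ih (fun w hw => h w (by simp [hw]))]
    rfl

lemma lsum_absorb_signed {x : SMax Γ} {L : List (SMax Γ)}
    (hle : ∀ z ∈ L, mod z ≤ mod x)
    (hsg : ∀ z ∈ L, mod z = mod x → sgn z = sgn x) :
    add x (lsum L) = x := by
  induction L with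
  | nil => exact add_zero' x
  | cons z L ih =>
    rw [lsum_cons, ← add_assoc']
    have hz : add x z = x := by
      rcases lt_or_eq_of_le (hle z (by simp)) with h | h
      · exact add_eq_left h
      · exact add_sgn h (hsg z (by simp) h)
    rw [hz]
    exact ih (fun w hw => hle w (by simp [hw])) (fun w hw => hsg w (by simp [hw]))

lemma lsum_absorb_bal {a : Γ} {L : List (SMax Γ)}
    (hle : ∀ z ∈ L, mod z ≤ (a : WithBot Γ)) :
    add (bal a) (lsum L) = bal a := by
  induction L with
  | nil => exact add_zero' _
  | cons z L ih =>
    rw [lsum_cons, ← add_assoc', add_bal_left (hle z (by simp))]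
    exact ih (fun w hw => hle w (by simp [hw]))

lemma lsum_absorb_mixed {x : SMax Γ} {L : List (SMax Γ)} (hx : x ≠ zero)
    (hle : ∀ z ∈ L, mod z ≤ mod x)
    (hsg : ∃ z ∈ L, mod z = mod x ∧ sgn z ≠ sgn x) :
    add x (lsum L) = mul (bal 0) x := by
  obtain ⟨u, hu⟩ := mod_coe_of_ne hx
  have hbx : mul (bal 0) x = bal u := by rw [bal_mul 0 hu, zero_add]
  induction L with
  | nil => simp at hsg
  | cons z L ih =>
    by_cases hcase : mod z = mod x ∧ sgn z ≠ sgn x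
    · rw [lsum_cons, ← add_assoc', add_mixed hcase.1 hx hcase.2, hbx]
      exact lsum_absorb_bal (fun w hw => (hu ▸ hle w (by simp [hw])))
    · obtain ⟨w, hwL, hw⟩ := hsg
      have hwtail : w ∈ L := by
        rcases List.mem_cons.mp hwL with h | h
        · exact absurd (h ▸ hw) hcase
        · exact h
      rw [lsum_cons, add_comm' z (lsum L), ← add_assoc',
        ih (fun w hw => hle w (by simp [hw])) ⟨w, hwtail, hw⟩, hbx]
      exact add_bal_left (hu ▸ hle z (by simp))

lemma lsum_map_mul (L : List (SMax Γ)) (c : SMax Γ) :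
    lsum (L.map fun z => mul z c) = mul (lsum L) c := by
  induction L with
  | nil => simp [lsum, zero_mul']
  | cons z L ih => simp only [List.map_cons, lsum_cons, ih, add_mul']

lemma spow_succ (y : SMax Γ) (k : ℕ) : spow y (k + 1) = mul y (spow y k) := rfl

lemma mod_spow (y : SMax Γ) (k : ℕ) : mod (spow y k) = k • mod y := by
  induction k with
  | zero => rw [zero_nsmul]; rfl
  | succ k ih => rw [spow_succ, mod_mul, ih, succ_nsmul, add_comm]

lemma coe_nsmul (t : Γ) (k : ℕ) :
    k • ((t : WithBot Γ)) = ((k • t : Γ) : WithBot Γ) := by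
  induction k with
  | zero => simp
  | succ k ih => rw [succ_nsmul, succ_nsmul, ih, WithBot.coe_add]

lemma phat_succ (P : ℕ → SMax Γ) (N : ℕ) (y : SMax Γ) :
    phat P (N + 1) y = add (mul (P 0) one) (mul (phat (fun k => P (k + 1)) N y) y) := by
  show lsum ((List.range (N + 2)).map fun k => mul (P k) (spow y k)) = _
  rw [List.range_succ_eq_map, List.map_cons, List.map_map, lsum_cons]
  congr 1
  have h1 : ((fun k => mul (P k) (spow y k)) ∘ Nat.succ)
      = (fun z => mul z y) ∘ (fun k => mul (P (k + 1)) (spow y k)) := by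
    funext k
    show mul (P (k + 1)) (mul y (spow y k)) = mul (mul (P (k + 1)) (spow y k)) y
    rw [mul_comm' y (spow y k), ← mul_assoc']
  rw [h1, ← List.map_map, lsum_map_mul]
  rfl

lemma phat_zero_eval (P : ℕ → SMax Γ) (N : ℕ) : phat P N .zero = P 0 := by
  show lsum ((List.range (N + 1)).map fun k => mul (P k) (spow .zero k)) = P 0
  rw [List.range_succ_eq_map, List.map_cons, lsum_cons]
  have h1 : lsum (List.map ((fun k => mul (P k) (spow .zero k)) ∘ Nat.succ) (List.range N))
      = zero := by
    apply lsum_eq_zero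
    intro z hz
    simp only [List.mem_map, Function.comp] at hz
    obtain ⟨k, _, rfl⟩ := hz
    show mul (P (k + 1)) (spow zero (k + 1)) = zero
    rw [spow_succ, zero_mul', mul_zero']
  rw [List.map_map, h1, add_zero']
  show mul (P 0) one = P 0
  exact mul_one' _

lemma evalFactors_append (y : SMax Γ) (L1 L2 : List (SMax Γ)) :
    evalFactors y (L1 ++ L2) = mul (evalFactors y L1) (evalFactors y L2) := by
  induction L1 with
  | nil => simp [evalFactors, one_mul']
  | cons z L ih => simp [evalFactors, ih, mul_assoc']

lemma mod_evalFactors (y : SMax Γ) (L : List (SMax Γ)) :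
    mod (evalFactors y L) = (L.map fun z => max (mod y) (mod z)).sum := by
  induction L with
  | nil => simp [evalFactors, one, mod]
  | cons z L ih =>
    simp only [evalFactors, mod_mul, mod_add, mod_sneg, ih, List.map_cons, List.sum_cons]

lemma foldr_max_seed (L : List (WithBot Γ)) (b : WithBot Γ) :
    L.foldr max b = max (L.foldr max ⊥) b := by
  induction L with
  | nil => simp
  | cons a L ih => simp [ih, max_assoc]

lemma sup_eq_fold (gg : ℕ → WithBot Γ) (N : ℕ) :
    (Finset.range N).sup gg = ((List.range N).map gg).foldr max ⊥ := by
  induction N with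
  | zero => simp
  | succ N ih =>
    rw [Finset.range_add_one, Finset.sup_insert, List.range_succ, List.map_append,
      List.map_singleton, List.foldr_append, ih]
    rw [show List.foldr max ⊥ [gg N] = max (gg N) ⊥ from rfl, max_eq_left bot_le,
      foldr_max_seed _ (gg N)]
    exact max_comm _ _

lemma tphat_mod (P : ℕ → SMax Γ) (n : ℕ) (y : SMax Γ) :
    tphat (fun k => mod (P k)) n (mod y) = mod (phat P n y) := by
  show (Finset.range (n + 1)).sup (fun k => mod (P k) + k • mod y) = _
  rw [sup_eq_fold]
  show _ = mod (lsum ((List.range (n + 1)).map fun k => mul (P k) (spow y k)))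
  rw [mod_lsum, List.map_map]
  congr 1
  apply List.map_congr_left
  intro k _
  simp [Function.comp, mod_mul, mod_spow]

/-- Helper for group inequalities: from `a + b ≤ c + c` and `c + s ≤ b`, get `a + s ≤ c`. -/
lemma gamma_step {a b c s : Γ} (h1 : a + b ≤ c + c) (h2 : c + s ≤ b) : a + s ≤ c := by
  have h3 : a + s + (b + c) ≤ c + (b + c) := by
    calc a + s + (b + c) = (a + b) + (c + s) := by abel
      _ ≤ (c + c) + b := add_le_add h1 h2
      _ = c + (b + c) := by abel
  exact le_of_add_le_add_right h3

lemma withbot_solve {x : WithBot Γ} {a b : Γ}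
    (h : x + (a : WithBot Γ) = (b : WithBot Γ)) : x = ((b - a : Γ) : WithBot Γ) := by
  cases x with
  | bot => simp at h
  | coe u =>
    rw [← WithBot.coe_add, WithBot.coe_inj] at h
    rw [WithBot.coe_inj]
    exact eq_sub_of_add_eq h

/-- The key one-step factorization lemma at a nonzero point `y`. -/
lemma keyA (P : ℕ → SMax Γ) (n : ℕ) (ρ y : SMax Γ) (t s : Γ) (g : ℕ → Γ)
    (hg : ∀ k, k ≤ n + 1 → mod (P k) = ((g k : Γ) : WithBot Γ))
    (hy : mod y = (t : WithBot Γ)) (hs : mod ρ = (s : WithBot Γ))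
    (heq : mul ρ (P 1) = sneg (P 0))
    (gap : ∀ k, k ≤ n → g (k + 1) + s ≤ g k) :
    add (mul (P 0) one) (mul (phat (fun k => P (k + 1)) n y) y)
      = mul (phat (fun k => P (k + 1)) n y) (add y (sneg ρ)) := by
  have hP1ne : P 1 ≠ zero := by
    intro h
    have : mod (P 1) = ⊥ := by rw [h]; rfl
    rw [hg 1 (by omega)] at this
    exact absurd this (by simp)
  have key0 : s + g 1 = g 0 := by
    have := congrArg mod heq
    rw [mod_mul, mod_sneg, hs, hg 1 (by omega), hg 0 (by omega), ← WithBot.coe_add,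
      WithBot.coe_inj] at this
    exact this
  have hmulsneg : mul (P 1) (sneg ρ) = P 0 := by
    rw [mul_sneg, mul_comm', heq, sneg_sneg']
  -- the chain bound
  have G : ∀ k, k ≤ n → g (k + 1) + k • s ≤ g 1 := by
    intro k
    induction k with
    | zero => intro _; simp
    | succ k ih =>
      intro hk
      have h1 : g (k + 2) + s ≤ g (k + 1) := gap (k + 1) hk
      have h2 : g (k + 1) + k • s ≤ g 1 := ih (by omega)
      calc g (k + 2) + (k + 1) • s = (g (k + 2) + s) + k • s := by
            rw [succ_nsmul]; abel
        _ ≤ g (k + 1) + k • s := add_le_add_left h1 _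
        _ ≤ g 1 := h2
  set T := phat (fun k => P (k + 1)) n y with hTdef
  set f : ℕ → SMax Γ := fun k => mul (P (k + 1)) (spow y k) with hfdef
  have hT : T = add (f 0) (lsum ((List.range n).map fun k => f (k + 1))) := by
    rw [hTdef]
    show lsum ((List.range (n + 1)).map fun k => mul (P (k + 1)) (spow y k)) = _
    rw [List.range_succ_eq_map, List.map_cons, List.map_map, lsum_cons]
    rfl
  have hf0e : f 0 = P 1 := mul_one' _
  have hf0 : mod (f 0) = ((g 1 : Γ) : WithBot Γ) := by rw [hf0e, hg 1 (by omega)]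
  have hfmod : ∀ k, k ≤ n → mod (f k) = ((g (k + 1) + k • t : Γ) : WithBot Γ) := by
    intro k hk
    rw [hfdef]
    show mod (mul (P (k + 1)) (spow y k)) = _
    rw [mod_mul, mod_spow, hy, coe_nsmul, hg (k + 1) (by omega), WithBot.coe_add]
  have hTmod : ((g 1 : Γ) : WithBot Γ) ≤ mod T := by
    rw [hT, mod_add, ← hf0]
    exact le_max_left _ _
  rcases lt_trichotomy t s with hts | hts | hts
  · -- t < s : both sides equal P 0
    have hstrict : ∀ k, 1 ≤ k → k ≤ n → g (k + 1) + k • t < g 1 := by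
      intro k
      induction k with
      | zero => omega
      | succ k ih =>
        intro _ hk
        rcases Nat.eq_zero_or_pos k with rfl | hkpos
        · have := gap 1 hk
          calc g 2 + 1 • t = g 2 + t := by rw [one_nsmul]
            _ < g 2 + s := by exact add_lt_add_right hts _
            _ ≤ g 1 := this
        · have h1 : g (k + 2) + s ≤ g (k + 1) := gap (k + 1) hk
          have h2 : g (k + 1) + k • t < g 1 := ih hkpos (by omega)
          calc g (k + 2) + (k + 1) • t = (g (k + 2) + t) + k • t := by
                rw [succ_nsmul]; abel
            _ < (g (k + 2) + s) + k • t := by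
                exact add_lt_add_left (add_lt_add_right hts _) _
            _ ≤ g (k + 1) + k • t := add_le_add_left h1 _
            _ < g 1 := h2
    have hTeq : T = P 1 := by
      rw [hT]
      rw [lsum_absorb_signed (x := f 0)]
      · exact hf0e
      · intro z hz
        simp only [List.mem_map, List.mem_range] at hz
        obtain ⟨k, hk, rfl⟩ := hz
        rw [hfmod (k + 1) (by omega), hf0, WithBot.coe_le_coe]
        exact le_of_lt (hstrict (k + 1) (by omega) (by omega))
      · intro z hz hmz
        exfalso
        simp only [List.mem_map, List.mem_range] at hz
        obtain ⟨k, hk, rfl⟩ := hz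
        rw [hfmod (k + 1) (by omega), hf0, WithBot.coe_inj] at hmz
        exact absurd hmz (ne_of_lt (hstrict (k + 1) (by omega) (by omega)))
    rw [hTeq, mul_one']
    have hm1 : mod (mul (P 1) y) < mod (P 0) := by
      rw [mod_mul, hg 1 (by omega), hg 0 (by omega), hy, ← WithBot.coe_add,
        WithBot.coe_lt_coe, ← key0]
      calc g 1 + t < g 1 + s := add_lt_add_right hts _
        _ = s + g 1 := add_comm _ _
    rw [add_eq_left hm1, mul_add', hmulsneg]
    have hm2 : mod (mul (P 1) y) < mod (P 0) := hm1
    rw [add_eq_right hm2]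
  · -- t = s : tie case
    subst hts
    have hle : ∀ z ∈ (List.range n).map (fun k => f (k + 1)), mod z ≤ mod (f 0) := by
      intro z hz
      simp only [List.mem_map, List.mem_range] at hz
      obtain ⟨k, hk, rfl⟩ := hz
      rw [hfmod (k + 1) (by omega), hf0, WithBot.coe_le_coe]
      exact G (k + 1) (by omega)
    by_cases hB : ∀ z ∈ (List.range n).map (fun k => f (k + 1)),
        mod z = mod (f 0) → sgn z = sgn (f 0)
    · have hTeq : T = P 1 := by rw [hT, lsum_absorb_signed hle hB]; exact hf0e
      rw [hTeq, mul_one', mul_add', hmulsneg, add_comm']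
    · push_neg at hB
      obtain ⟨z, hz, hmz, hsz⟩ := hB
      have hTeq : T = bal (g 1) := by
        rw [hT, lsum_absorb_mixed (by rw [hf0e]; exact hP1ne) hle ⟨z, hz, hmz, hsz⟩,
          hf0e, bal_mul 0 (hg 1 (by omega)), zero_add]
      rw [hTeq, mul_one']
      have h1 : mul (bal (g 1)) y = bal (g 1 + t) := bal_mul _ hy
      have h2 : mod (add y (sneg ρ)) = ((t : Γ) : WithBot Γ) := by
        rw [mod_add, mod_sneg, hy, hs, max_self]
      have h3 : mul (bal (g 1)) (add y (sneg ρ)) = bal (g 1 + t) := bal_mul _ h2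
      rw [h1, h3]
      apply add_bal_right
      rw [hg 0 (by omega), WithBot.coe_le_coe, ← key0, add_comm]
  · -- t > s : both sides equal (mul T y)
    obtain ⟨u, hu, hgu⟩ : ∃ u : Γ, mod T = ((u : Γ) : WithBot Γ) ∧ g 1 ≤ u := by
      cases hmt : mod T with
      | bot => rw [hmt] at hTmod; exact absurd hTmod (by simp)
      | coe u =>
        rw [hmt, WithBot.coe_le_coe] at hTmod
        exact ⟨u, rfl, hTmod⟩
    have hsy : add y (sneg ρ) = y := by
      apply add_eq_left
      rw [mod_sneg, hy, hs, WithBot.coe_lt_coe]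
      exact hts
    rw [hsy, mul_one']
    apply add_eq_right
    rw [mod_mul, hu, hy, ← WithBot.coe_add, hg 0 (by omega), WithBot.coe_lt_coe, ← key0]
    calc s + g 1 < t + g 1 := add_lt_add_left hts _
      _ = g 1 + t := add_comm _ _
      _ ≤ u + t := add_le_add_left hgu _

/-- Main induction: evaluation of the factorization. -/
lemma main_ind : ∀ (n m : ℕ) (P r : ℕ → SMax Γ), m ≤ n →
    (∀ k, P k ≠ zero ↔ m ≤ k ∧ k ≤ n) →
    (∀ k, m < k → k < n → mod (P (k + 1)) + mod (P (k - 1)) ≤ mod (P k) + mod (P k)) →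
    (∀ i, 1 ≤ i → i ≤ n - m → isSigned (r i) ∧ mul (r i) (P (n - i + 1)) = sneg (P (n - i))) →
    (∀ i, n - m < i → i ≤ n → r i = zero) →
    ∀ y, phat P n y = mul (P n) (evalFactors y ((List.range n).map fun i => r (i + 1))) := by
  intro n
  induction n with
  | zero =>
    intro m P r _ _ _ _ _ y
    show lsum ((List.range 1).map fun k => mul (P k) (spow y k)) = _
    show add (mul (P 0) (spow y 0)) (lsum []) = _
    rw [show lsum ([] : List (SMax Γ)) = zero from rfl, add_zero']
    show mul (P 0) one = mul (P 0) (evalFactors y [])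
    rfl
  | succ n ih =>
    intro m P r hmn hsupp hconc hr1 hr2 y
    have ihQ := ih (m - 1) (fun k => P (k + 1)) r (by omega)
      (by intro k; rw [hsupp (k + 1)]; omega)
      (by
        intro k h1 h2
        have h3 := hconc (k + 1) (by omega) (by omega)
        have e1 : k + 1 - 1 = k := by omega
        have e2 : k - 1 + 1 = k := by omega
        rw [e1] at h3
        show mod (P (k + 1 + 1)) + mod (P (k - 1 + 1)) ≤ _
        rw [e2]
        exact h3)
      (by
        intro i h1 h2
        have h3 := hr1 i h1 (by omega)
        refine ⟨h3.1, ?_⟩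
        have e1 : n + 1 - i + 1 = (n - i + 1) + 1 := by omega
        have e2 : n + 1 - i = (n - i) + 1 := by omega
        rw [e1, e2] at h3
        exact h3.2)
      (by
        intro i h1 h2
        exact hr2 i (by omega) (by omega))
    rw [List.range_succ, List.map_append, evalFactors_append, List.map_singleton]
    show phat P (n + 1) y = mul (P (n + 1))
      (mul (evalFactors y ((List.range n).map fun i => r (i + 1)))
        (mul (add y (sneg (r (n + 1)))) (evalFactors y [])))
    rw [show evalFactors y ([] : List (SMax Γ)) = one from rfl, mul_one', ← mul_assoc',
      ← ihQ y, phat_succ]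
    by_cases hm0 : m = 0
    · subst hm0
      have hρ := hr1 (n + 1) (by omega) (by omega)
      have e1 : n + 1 - (n + 1) + 1 = 1 := by omega
      have e2 : n + 1 - (n + 1) = 0 := by omega
      rw [e1, e2] at hρ
      have hPne : ∀ k, k ≤ n + 1 → P k ≠ zero := fun k hk =>
        (hsupp k).mpr ⟨Nat.zero_le _, hk⟩
      have hρne : r (n + 1) ≠ zero := by
        intro h
        rw [h, zero_mul'] at hρ
        exact hPne 0 (by omega) (sneg_eq_zero.mp hρ.2.symm)
      obtain ⟨s, hs⟩ := mod_coe_of_ne hρne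
      have hgd : ∀ k, k ≤ n + 1 → mod (P k) = ((WithBot.unbotD 0 (mod (P k)) : Γ) : WithBot Γ) := by
        intro k hk
        obtain ⟨u, hu⟩ := mod_coe_of_ne (hPne k hk)
        rw [hu]
        rfl
      set g : ℕ → Γ := fun k => WithBot.unbotD 0 (mod (P k)) with hgdef
      have hg : ∀ k, k ≤ n + 1 → mod (P k) = ((g k : Γ) : WithBot Γ) := hgd
      have key0 : s + g 1 = g 0 := by
        have := congrArg mod hρ.2
        rw [mod_mul, mod_sneg, hs, hg 1 (by omega), hg 0 (by omega), ← WithBot.coe_add,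
          WithBot.coe_inj] at this
        exact this
      have gap : ∀ k, k ≤ n → g (k + 1) + s ≤ g k := by
        intro k
        induction k with
        | zero => intro _; rw [add_comm]; exact le_of_eq key0
        | succ k ihk =>
          intro hk
          have h3 := hconc (k + 1) (by omega) (by omega)
          rw [hg (k + 2) (by omega), hg (k + 1) (by omega),
            show k + 1 - 1 = k from by omega, hg k (by omega), ← WithBot.coe_add,
            ← WithBot.coe_add, WithBot.coe_le_coe] at h3
          exact gamma_step h3 (ihk (by omega))
      rcases hy : y with _ | t | t | t
      · -- y = zero
        rw [mul_zero', add_zero', mul_one', zero_add', phat_zero_eval]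
        show P 0 = mul (P 1) (sneg (r (n + 1)))
        rw [mul_sneg, mul_comm', hρ.2, sneg_sneg']
      · exact keyA P n (r (n + 1)) (pos t) t s g hg rfl hs hρ.2 gap
      · exact keyA P n (r (n + 1)) (neg t) t s g hg rfl hs hρ.2 gap
      · exact keyA P n (r (n + 1)) (bal t) t s g hg rfl hs hρ.2 gap
    · -- m ≥ 1 : r (n+1) = 0 and P 0 = 0
      have hρ0 : r (n + 1) = zero := hr2 (n + 1) (by omega) (by omega)
      have hP0 : P 0 = zero := by
        by_contra h
        have := (hsupp 0).mp h
        omega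
      rw [hρ0, hP0, zero_mul',
        show sneg (zero : SMax Γ) = zero from rfl, add_zero', zero_add']

lemma final (P : ℕ → SMax Γ) (m n : ℕ) (hmn : m ≤ n)
    (hsupp : ∀ k, P k ≠ SMax.zero ↔ m ≤ k ∧ k ≤ n)
    (hconc : ∀ k, m < k → k < n →
      SMax.mod (P (k + 1)) + SMax.mod (P (k - 1))
        ≤ SMax.mod (P k) + SMax.mod (P k))
    (r : ℕ → SMax Γ)
    (hr1 : ∀ i, 1 ≤ i → i ≤ n - m →
      SMax.isSigned (r i) ∧ SMax.mul (r i) (P (n - i + 1)) = SMax.sneg (P (n - i)))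
    (hr2 : ∀ i, n - m < i → i ≤ n → r i = SMax.zero) :
    (∀ y : SMax Γ, SMax.phat P n y
        = SMax.mul (P n) (SMax.evalFactors y ((List.range n).map fun i => r (i + 1)))) ∧
    (∀ i, 1 ≤ i → i < n → SMax.mod (r (i + 1)) ≤ SMax.mod (r i)) ∧
    (∀ x : WithBot Γ, SMax.tphat (fun k => SMax.mod (P k)) n x
        = SMax.mod (P n) + ((List.range n).map fun i => max x (SMax.mod (r (i + 1)))).sum) := by
  have part1 := main_ind n m P r hmn hsupp hconc hr1 hr2
  refine ⟨part1, ?_, ?_⟩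
  · -- monotonicity of the moduli of the roots
    intro i h1 h2
    by_cases hc : i + 1 ≤ n - m
    · have e1 := (hr1 i h1 (by omega)).2
      have e2 := (hr1 (i + 1) (by omega) hc).2
      have hPne : ∀ k, m ≤ k → k ≤ n → P k ≠ zero := fun k hk1 hk2 =>
        (hsupp k).mpr ⟨hk1, hk2⟩
      obtain ⟨a1, ha1⟩ := mod_coe_of_ne (hPne (n - i + 1) (by omega) (by omega))
      obtain ⟨a2, ha2⟩ := mod_coe_of_ne (hPne (n - i) (by omega) (by omega))
      obtain ⟨a3, ha3⟩ := mod_coe_of_ne (hPne (n - i - 1) (by omega) (by omega))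
      have eri : mod (r i) = ((a2 - a1 : Γ) : WithBot Γ) := by
        apply withbot_solve
        rw [← ha1, ← ha2, ← mod_mul, e1, mod_sneg]
      have eri1 : mod (r (i + 1)) = ((a3 - a2 : Γ) : WithBot Γ) := by
        apply withbot_solve
        rw [show n - (i + 1) + 1 = n - i from by omega, show n - (i + 1) = n - i - 1 from by omega]
          at e2
        rw [← ha2, ← ha3, ← mod_mul, e2, mod_sneg]
      have hcc := hconc (n - i) (by omega) (by omega)
      rw [ha1, ha2, ha3, ← WithBot.coe_add, ← WithBot.coe_add, WithBot.coe_le_coe] at hcc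
      rw [eri, eri1, WithBot.coe_le_coe, sub_le_sub_iff]
      calc a3 + a1 = a1 + a3 := add_comm _ _
        _ ≤ a2 + a2 := hcc
    · have h3 : r (i + 1) = zero := hr2 (i + 1) (by omega) (by omega)
      rw [h3]
      exact bot_le
  · -- tropical factorization of the modulus polynomial
    intro x
    have key : ∀ y : SMax Γ, mod y = x →
        tphat (fun k => mod (P k)) n x
          = mod (P n) + ((List.range n).map fun i => max x (mod (r (i + 1)))).sum := by
      intro y hyx
      rw [← hyx, tphat_mod, part1 y, mod_mul, mod_evalFactors, List.map_map]
      rfl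
    cases x with
    | bot => exact key zero rfl
    | coe t => exact key (pos t) rfl

end SMax


/-- Sufficient condition for factorization over `S_max(Γ)`, `Γ` divisible.
If `P` has signed coefficients and `|P|` is factored (full support between the
lower degree `m` and the degree `n`, and concave coefficient map), then `P̂`
factors as `P̂(y) = P_n ⊙ (y ⊖ r₁) ⊙ ⋯ ⊙ (y ⊖ r_n)` where the `r_i` are the
unique signed elements with `r_i ⊙ P_{n-i+1} = ⊖ P_{n-i}` for `i ≤ n - m` and
`r_i = 0` otherwise; moreover `|r₁| ≥ ⋯ ≥ |r_n|` are the corners of `|P|`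
counted with multiplicities (i.e. `|P|` factors tropically through them). -/
theorem smax_sufficient_condition_for_factorization {Γ : Type}
    [AddCommGroup Γ] [LinearOrder Γ] [IsOrderedAddMonoid Γ]
    (hdiv : ∀ (g : Γ) (k : ℕ), 0 < k → ∃ h : Γ, k • h = g)
    (P : ℕ → SMax Γ) (m n : ℕ) (hmn : m ≤ n)
    (hsigned : ∀ k, SMax.isSigned (P k))
    (hsupp : ∀ k, P k ≠ SMax.zero ↔ m ≤ k ∧ k ≤ n)
    (hconc : ∀ k, m < k → k < n →
      SMax.mod (P (k + 1)) + SMax.mod (P (k - 1))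
        ≤ SMax.mod (P k) + SMax.mod (P k))
    (r : ℕ → SMax Γ)
    (hr1 : ∀ i, 1 ≤ i → i ≤ n - m →
      SMax.isSigned (r i) ∧ SMax.mul (r i) (P (n - i + 1)) = SMax.sneg (P (n - i)))
    (hr2 : ∀ i, n - m < i → i ≤ n → r i = SMax.zero) :
    (∀ y : SMax Γ, SMax.phat P n y
        = SMax.mul (P n) (SMax.evalFactors y ((List.range n).map fun i => r (i + 1)))) ∧
    (∀ i, 1 ≤ i → i < n → SMax.mod (r (i + 1)) ≤ SMax.mod (r i)) ∧
    (∀ x : WithBot Γ, SMax.tphat (fun k => SMax.mod (P k)) n x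
        = SMax.mod (P n) + ((List.range n).map fun i => max x (SMax.mod (r (i + 1)))).sum) := by
  exact SMax.final P m n hmn hsupp hconc r hr1 hr2
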